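/- A digraph D contains no directed cycle of odd length if and only if every strong component of D is bipartite (i.e. the underlying undirected graph of each strong component is bipartite). -/

import Mathlib

open scoped Classical

variable {V : Type*} [Fintype V]

/-- The out-neighborhood of `v` in the digraph on `V` with edge relation `E`. -/
noncomputable def outNbrs (E : V → V → Prop) (v : V) : Finset V :=
  Finset.univ.filter (fun w => E v w)

/-- The in-neighborhood of `v` in the digraph on `V` with edge relation `E`. -/
noncomputable def inNbrs (E : V → V → Prop) (v : V) : Finset V :=
  Finset.univ.filter (fun w => E w v)

/-- `c` is a majority coloring of the digraph `(V, E)`: every vertex `v` has at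
most `d⁺(v)/2` out-neighbors `w` with `c w = c v`. -/
def IsMajorityColoring {α : Type*} (E : V → V → Prop) (c : V → α) : Prop :=
  ∀ v : V, 2 * ((outNbrs E v).filter (fun w => c w = c v)).card ≤ (outNbrs E v).card

/-- `l` is the vertex list of a directed cycle: a nonempty list of pairwise
distinct vertices in which each vertex has an edge to the next one, and the
last vertex has an edge back to the first one. -/
def IsDiCycle (E : V → V → Prop) (l : List V) : Prop :=
  l ≠ [] ∧ l.Nodup ∧ l.Chain' E ∧
    ∃ a b, l.head? = some a ∧ l.getLast? = some b ∧ E b a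

/-- All vertices of the list `l` get the same color under `c`. -/
def MonochromaticList {α : Type*} (c : V → α) (l : List V) : Prop :=
  ∀ u ∈ l, ∀ w ∈ l, c u = c w

/-- The digraph `(V, E)` is majority `k`-choosable: for every assignment of
lists of size at least `k` to the vertices there is a majority coloring
choosing each vertex's color from its list. -/
def MajorityChoosable (E : V → V → Prop) (k : ℕ) : Prop :=
  ∀ L : V → Finset ℕ, (∀ v, k ≤ (L v).card) →
    ∃ c : V → ℕ, (∀ v, c v ∈ L v) ∧ IsMajorityColoring E c

/-- Every ordered pair of vertices of `S` is joined by a directed walk staying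
inside `S` (i.e. the subdigraph induced on `S` is strongly connected). -/
def StronglyConnectedIn (E : V → V → Prop) (S : Set V) : Prop :=
  ∀ u ∈ S, ∀ v ∈ S, Relation.ReflTransGen (fun a b => a ∈ S ∧ b ∈ S ∧ E a b) u v

/-- `S` is a strong component of `(V, E)`: a maximal vertex set inducing a
strongly connected subdigraph. -/
def IsStrongComponent (E : V → V → Prop) (S : Set V) : Prop :=
  S.Nonempty ∧ StronglyConnectedIn E S ∧
    ∀ T : Set V, S ⊆ T → StronglyConnectedIn E T → T ⊆ S

section Aux

variable {W : Type*}

/-- A closed directed walk: like `IsDiCycle` but without the `Nodup` condition. -/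
def IsClosedWalk (E : W → W → Prop) (l : List W) : Prop :=
  l ≠ [] ∧ l.Chain' E ∧ ∃ a b, l.head? = some a ∧ l.getLast? = some b ∧ E b a

lemma exists_dup_decomp {l : List W} (h : ¬ l.Nodup) :
    ∃ (a b c : List W) (x : W), l = a ++ x :: (b ++ x :: c) := by
  induction l with
  | nil => simp at h
  | cons y tl ih =>
    by_cases hy : y ∈ tl
    · obtain ⟨b, c, rfl⟩ := List.append_of_mem hy
      exact ⟨[], b, c, y, by simp⟩
    · have htl : ¬ tl.Nodup := fun hn => h (List.nodup_cons.mpr ⟨hy, hn⟩)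
      obtain ⟨a, b, c, x, rfl⟩ := ih htl
      exact ⟨y :: a, b, c, x, by simp⟩

/-- An odd closed walk contains an odd directed cycle. -/
lemma odd_closed_walk_to_cycle (E : W → W → Prop) :
    ∀ n (l : List W), l.length ≤ n → IsClosedWalk E l → Odd l.length →
      ∃ l', IsDiCycle E l' ∧ Odd l'.length := by
  intro n
  induction n with
  | zero =>
    rintro l hl ⟨hne, -⟩ -
    simp [List.length_eq_zero_iff.mp (Nat.le_zero.mp hl)] at hne
  | succ n ih =>
    rintro l hl ⟨hne, hchain, a, b, ha, hb, hE⟩ hodd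
    by_cases hnd : l.Nodup
    · exact ⟨l, ⟨hne, hnd, hchain, a, b, ha, hb, hE⟩, hodd⟩
    obtain ⟨p, q, r, x, rfl⟩ := exists_dup_decomp hnd
    -- the two closed walks W1 = x :: q and W2 = p ++ x :: r
    have hinfix : (x :: q ++ [x]) <:+: p ++ x :: (q ++ x :: r) :=
      ⟨p, r, by simp⟩
    have hch1 : (x :: q ++ [x]).Chain' E := hchain.infix hinfix
    rw [List.Chain', List.isChain_append] at hch1
    obtain ⟨hchW1, -, hjunc1⟩ := hch1
    have hg : (x :: q).getLast? = some ((x :: q).getLast (List.cons_ne_nil x q)) :=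
      List.getLast?_eq_getLast _
    have hEgx : E ((x :: q).getLast (List.cons_ne_nil x q)) x := hjunc1 _ hg x rfl
    have hW1 : IsClosedWalk E (x :: q) :=
      ⟨List.cons_ne_nil x q, hchW1, x, _, rfl, hg, hEgx⟩
    -- W2 = p ++ x :: r
    have hchain' : (p ++ ((x :: q) ++ (x :: r))).Chain' E := by simpa using hchain
    rw [List.Chain', List.isChain_append] at hchain'
    obtain ⟨hchp, hchmid, hjunc2⟩ := hchain'
    rw [List.isChain_append] at hchmid
    obtain ⟨-, hchxr, -⟩ := hchmid
    have hchW2 : (p ++ x :: r).Chain' E := by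
      rw [List.Chain', List.isChain_append]
      refine ⟨hchp, hchxr, ?_⟩
      intro u hu v hv
      simp only [List.head?_cons, Option.mem_def, Option.some.injEq] at hv
      subst hv
      exact hjunc2 u hu x (by simp)
    have hheadW2 : (p ++ x :: r).head? = some a := by
      rw [List.head?_append] at ha ⊢
      rcases p with _ | ⟨y, p'⟩ <;> simpa using ha
    have hglxr : (x :: r).getLast? = some ((x :: r).getLast (List.cons_ne_nil x r)) :=
      List.getLast?_eq_getLast _
    have hb' : (x :: r).getLast? = some b := by
      rw [show p ++ x :: (q ++ x :: r) = (p ++ x :: q) ++ (x :: r) by simp,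
        List.getLast?_append, hglxr] at hb
      simpa [hglxr] using hb
    have hlastW2 : (p ++ x :: r).getLast? = some b := by
      rw [List.getLast?_append, hb']; rfl
    have hW2 : IsClosedWalk E (p ++ x :: r) :=
      ⟨by simp, hchW2, a, b, hheadW2, hlastW2, hE⟩
    -- lengths
    have hlen : (x :: q).length + (p ++ x :: r).length = (p ++ x :: (q ++ x :: r)).length := by
      simp; omega
    have htot : Odd ((x :: q).length + (p ++ x :: r).length) := hlen ▸ hodd
    have h1pos : 1 ≤ (x :: q).length := by simp
    have h2pos : 1 ≤ (p ++ x :: r).length := by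
      simp only [List.length_append, List.length_cons]; omega
    have hln : (p ++ x :: (q ++ x :: r)).length ≤ n + 1 := hl
    rcases Nat.even_or_odd (x :: q).length with he | ho
    · have ho2 : Odd (p ++ x :: r).length := by
        rcases htot with ⟨k, hk⟩
        rcases he with ⟨m, hm⟩
        exact ⟨k - m, by omega⟩
      exact ih (p ++ x :: r) (by omega) hW2 ho2
    · exact ih (x :: q) (by omega) hW1 ho

/-- Lift a walk in `R` to the parity double cover: the parity shift is uniform. -/
lemma lift_parity {R : W → W → Prop} {u v : W} (h : Relation.ReflTransGen R u v) :
    ∃ p : Bool, ∀ b : Bool, Relation.ReflTransGen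
      (fun x y : W × Bool => R x.1 y.1 ∧ y.2 = !x.2) (u, b) (v, xor b p) := by
  induction h with
  | refl => exact ⟨false, fun b => by simpa using Relation.ReflTransGen.refl⟩
  | tail h e ih =>
    obtain ⟨p, hp⟩ := ih
    exact ⟨!p, fun b => (hp b).tail ⟨e, by cases b <;> cases p <;> rfl⟩⟩

/-- Project a walk in the parity double cover to a vertex list. -/
lemma walk_of_reach2 {R : W → W → Prop} {x y : W × Bool}
    (h : Relation.ReflTransGen (fun a b : W × Bool => R a.1 b.1 ∧ b.2 = !a.2) x y) :
    ∃ l : List W, l ≠ [] ∧ l.Chain' R ∧ l.head? = some x.1 ∧ l.getLast? = some y.1 ∧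
      (Odd l.length ↔ x.2 = y.2) := by
  induction h with
  | refl => exact ⟨[x.1], by simp, List.isChain_singleton _, by simp, by simp, by simp⟩
  | @tail m z h e ih =>
    obtain ⟨l, hne, hch, hhd, hlast, hpar⟩ := ih
    refine ⟨l ++ [z.1], by simp, ?_, ?_, by simp, ?_⟩
    · rw [List.Chain', List.isChain_append]
      refine ⟨hch, List.isChain_singleton _, fun u hu w hw => ?_⟩
      simp only [Option.mem_def, hlast, Option.some.injEq] at hu
      simp only [List.head?_cons, Option.mem_def, Option.some.injEq] at hw
      subst hu; subst hw
      exact e.1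
    · rw [List.head?_append, hhd]; rfl
    · have : (l ++ [z.1]).length = l.length + 1 := by simp
      rw [this, Nat.odd_add_one, hpar, e.2]
      cases x.2 <;> cases m.2 <;> simp

/-- From the head of a chain one can reach every member. -/
lemma reach_head_mem {R : W → W → Prop} :
    ∀ (l : List W), l.Chain' R → ∀ h, l.head? = some h → ∀ x ∈ l,
      Relation.ReflTransGen R h x := by
  intro l
  induction l with
  | nil => intro _ h hh x hx; simp at hx
  | cons y tl ih =>
    intro hch h hh x hx
    simp only [List.head?_cons, Option.some.injEq] at hh
    subst hh
    rcases List.mem_cons.mp hx with rfl | hx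
    · exact Relation.ReflTransGen.refl
    · rcases tl with _ | ⟨z, tl'⟩
      · simp at hx
      · have hRyz : R y z := (List.isChain_cons_cons.mp hch).1
        have := ih (List.isChain_cons_cons.mp hch).2 z rfl x hx
        exact Relation.ReflTransGen.head hRyz this

/-- Every member of a chain can reach its last element. -/
lemma reach_mem_last {R : W → W → Prop} :
    ∀ (l : List W), l.Chain' R → ∀ g, l.getLast? = some g → ∀ x ∈ l,
      Relation.ReflTransGen R x g := by
  intro l
  induction l with
  | nil => intro _ g hg x hx; simp at hx
  | cons y tl ih =>
    intro hch g hg x hx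
    rcases tl with _ | ⟨z, tl'⟩
    · simp at hg hx
      subst hg; subst hx
      exact Relation.ReflTransGen.refl
    · have hg' : (z :: tl').getLast? = some g := by
        simpa [List.getLast?_cons_cons] using hg
      have hRyz : R y z := (List.isChain_cons_cons.mp hch).1
      have hch' := (List.isChain_cons_cons.mp hch).2
      rcases List.mem_cons.mp hx with rfl | hx
      · exact Relation.ReflTransGen.head hRyz (ih hch' g hg' z (by simp))
      · exact ih hch' g hg' x hx

/-- Strengthen a chain using membership information. -/
lemma chain'_imp_mem {R R' : W → W → Prop} :
    ∀ (l : List W), l.Chain' R → (∀ a ∈ l, ∀ b ∈ l, R a b → R' a b) → l.Chain' R' := by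
  intro l
  induction l with
  | nil => intro _ _; exact List.isChain_nil
  | cons y tl ih =>
    intro hch himp
    rcases tl with _ | ⟨z, tl'⟩
    · exact List.isChain_singleton _
    · rw [List.Chain', List.isChain_cons_cons] at hch ⊢
      refine ⟨himp y (by simp) z (by simp) hch.1, ih hch.2 fun a ha b hb hr =>
        himp a (by simp [ha]) b (by simp [hb]) hr⟩

/-- Parity of a boolean coloring along a chain where consecutive values differ. -/
lemma bool_chain_parity {f : W → Bool} :
    ∀ (l : List W) (x : W), (x :: l).Chain' (fun a b => f a ≠ f b) →
      ∀ b, (x :: l).getLast? = some b → (f b = f x ↔ Even l.length) := by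
  intro l
  induction l with
  | nil =>
    intro x _ b hb
    simp at hb
    subst hb
    simp
  | cons y tl ih =>
    intro x hch b hb
    have hne : f x ≠ f y := (List.isChain_cons_cons.mp hch).1
    have hch' : (y :: tl).Chain' (fun a b => f a ≠ f b) := (List.isChain_cons_cons.mp hch).2
    have hb' : (y :: tl).getLast? = some b := by
      simpa [List.getLast?_cons_cons] using hb
    have hih := ih y hch' b hb'
    constructor
    · intro hfb
      have hfby : f b ≠ f y := by
        revert hne hfb; cases f x <;> cases f y <;> cases f b <;> simp
      have : ¬ Even tl.length := fun he => hfby (hih.mpr he)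
      simpa [Nat.even_add_one] using this
    · intro he
      have : ¬ Even tl.length := by simpa [Nat.even_add_one] using he
      have hfby : f b ≠ f y := fun h' => this (hih.mp h')
      revert hne hfby
      cases f x <;> cases f y <;> cases f b <;> simp

/-- A walk between mutually connected vertices can be restricted to the
mutual-connectivity class. -/
lemma reach_restrict {E : W → W → Prop} {v₀ : W}
    (S : Set W) (hS : S = {w | Relation.ReflTransGen E v₀ w ∧ Relation.ReflTransGen E w v₀}) :
    ∀ {u v : W}, Relation.ReflTransGen E u v → Relation.ReflTransGen E v v₀ →
      Relation.ReflTransGen E v₀ u →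
      Relation.ReflTransGen (fun a b => a ∈ S ∧ b ∈ S ∧ E a b) u v := by
  intro u v h hv
  induction h using Relation.ReflTransGen.head_induction_on with
  | refl => intro _; exact Relation.ReflTransGen.refl
  | @head a c hac hcv ih =>
    intro hv0a
    have hv0c : Relation.ReflTransGen E v₀ c := hv0a.tail hac
    have hcv0 : Relation.ReflTransGen E c v₀ := hcv.trans hv
    have hav0 : Relation.ReflTransGen E a v₀ := (Relation.ReflTransGen.head hac hcv).trans hv
    have haS : a ∈ S := by rw [hS]; exact ⟨hv0a, hav0⟩
    have hcS : c ∈ S := by rw [hS]; exact ⟨hv0c, hcv0⟩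
    exact Relation.ReflTransGen.head ⟨haS, hcS, hac⟩ (ih hv0c)

end Aux

/-- A digraph contains no directed cycle of odd length iff the
underlying graph of each of its strong components is bipartite. -/
theorem no_odd_dicycle_iff_strong_components_bipartite
    {V : Type*} [Fintype V] (E : V → V → Prop) (hloopless : ∀ v : V, ¬ E v v) :
    (¬ ∃ l : List V, IsDiCycle E l ∧ Odd l.length) ↔
      ∀ S : Set V, IsStrongComponent E S →
        ∃ f : V → Bool, ∀ u ∈ S, ∀ v ∈ S, (E u v ∨ E v u) → f u ≠ f v := by
  constructor
  · -- no odd dicycle → components bipartite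
    intro hno S hS
    obtain ⟨⟨r, hr⟩, hconn, -⟩ := hS
    let E' : V → V → Prop := fun a b => a ∈ S ∧ b ∈ S ∧ E a b
    let E2 : V × Bool → V × Bool → Prop := fun x y => E' x.1 y.1 ∧ y.2 = !x.2
    -- Key: there is no odd closed walk at r inside S
    have hkey : ¬ Relation.ReflTransGen E2 (r, false) (r, true) := by
      intro hrr
      obtain ⟨l, hne, hch, hhd, hlast, hpar⟩ := walk_of_reach2 (R := E') hrr
      have hnotodd : ¬ Odd l.length := fun ho => by simpa using hpar.mp ho
      have heven : Even l.length := Nat.not_odd_iff_even.mp hnotodd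
      have hlpos : 1 ≤ l.length := List.length_pos_iff.mpr hne
      have hl2 : 2 ≤ l.length := by
        rcases heven with ⟨k, hk⟩; omega
      -- split off the last vertex
      have hdl : l.dropLast ++ [l.getLast hne] = l := List.dropLast_append_getLast hne
      have hglr : l.getLast hne = r := by
        have := List.getLast?_eq_getLast hne
        rw [hlast] at this
        exact (Option.some.injEq _ _ ▸ this.symm : _)
      set l' := l.dropLast with hl'def
      have hlen' : l'.length = l.length - 1 := List.length_dropLast
      have hne' : l' ≠ [] := by
        intro h
        rw [h] at hlen'
        simp at hlen'
        omega
      have hodd' : Odd l'.length := by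
        rcases heven with ⟨k, hk⟩
        exact ⟨k - 1, by omega⟩
      have hchE : l.Chain' E := hch.imp (fun a b h => h.2.2)
      have hch' : l'.Chain' E := hchE.prefix (List.dropLast_prefix l)
      have hhd' : l'.head? = some r := by
        have hhr : l.head? = some r := hhd
        rw [← hdl, List.head?_append] at hhr
        rcases hh : l'.head? with _ | y
        · exact absurd (List.head?_eq_none_iff.mp hh) hne'
        · rw [hh] at hhr; simpa using hhr
      have hgl' : l'.getLast? = some (l'.getLast hne') := List.getLast?_eq_getLast _
      have hEgr : E (l'.getLast hne') r := by
        have hcha : (l' ++ [r]).Chain' E := by rw [hglr] at hdl; rw [hdl]; exact hchE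
        rw [List.Chain', List.isChain_append] at hcha
        exact hcha.2.2 _ hgl' r rfl
      have hcw : IsClosedWalk E l' :=
        ⟨hne', hch', r, l'.getLast hne', hhd', hgl', hEgr⟩
      obtain ⟨l'', hcyc, hodd''⟩ := odd_closed_walk_to_cycle E l'.length l' le_rfl hcw hodd'
      exact hno ⟨l'', hcyc, hodd''⟩
    -- no vertex of S is reachable with both parities
    have hC2 : ∀ v ∈ S, ¬ (Relation.ReflTransGen E2 (r, false) (v, true) ∧
        Relation.ReflTransGen E2 (r, false) (v, false)) := by
      rintro v hv ⟨h1, h0⟩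
      obtain ⟨p, hp⟩ := lift_parity (R := E') (hconn v hv r hr)
      cases p with
      | false => exact hkey (h1.trans (by simpa using hp true))
      | true => exact hkey (h0.trans (by simpa using hp false))
    refine ⟨fun v => if Relation.ReflTransGen E2 (r, false) (v, true) then true
      else false, ?_⟩
    set f : V → Bool := fun v => if Relation.ReflTransGen E2 (r, false) (v, true) then true
      else false with hfdef
    have hfspec : ∀ u ∈ S, Relation.ReflTransGen E2 (r, false) (u, f u) := by
      intro u hu
      by_cases hre : Relation.ReflTransGen E2 (r, false) (u, true)
      · have hfu : f u = true := if_pos hre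
        rw [hfu]; exact hre
      · have hfu : f u = false := if_neg hre
        obtain ⟨p, hp⟩ := lift_parity (R := E') (hconn r hr u hu)
        have hpf := hp false
        cases p with
        | true => exact absurd (by simpa using hpf) hre
        | false =>
          rw [hfu]
          simpa using hpf
    have hfnot : ∀ u ∈ S, ¬ Relation.ReflTransGen E2 (r, false) (u, !(f u)) := by
      intro u hu hcon
      have h1 := hfspec u hu
      cases hfu : f u
      · rw [hfu] at h1 hcon
        exact hC2 u hu ⟨by simpa using hcon, h1⟩
      · rw [hfu] at h1 hcon
        exact hC2 u hu ⟨h1, by simpa using hcon⟩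
    intro u hu v hv hedge
    rcases hedge with h | h
    · intro heq
      have hstep : E2 (u, f u) (v, !(f u)) := ⟨⟨hu, hv, h⟩, rfl⟩
      have hreach := (hfspec u hu).tail hstep
      rw [heq] at hreach
      exact hfnot v hv hreach
    · intro heq
      have hstep : E2 (v, f v) (u, !(f v)) := ⟨⟨hv, hu, h⟩, rfl⟩
      have hreach := (hfspec v hv).tail hstep
      rw [← heq] at hreach
      exact hfnot u hu hreach
  · -- components bipartite → no odd dicycle
    rintro hbip ⟨l, hcyc, hodd⟩
    obtain ⟨hne, hnd, hch, a, b, ha, hb, hE⟩ := hcyc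
    set S : Set V := {w | Relation.ReflTransGen E a w ∧ Relation.ReflTransGen E w a}
      with hSdef
    have haS : a ∈ S := ⟨Relation.ReflTransGen.refl, Relation.ReflTransGen.refl⟩
    have hmem : ∀ x ∈ l, x ∈ S := by
      intro x hx
      refine ⟨reach_head_mem l hch a ha x hx, ?_⟩
      exact (reach_mem_last l hch b hb x hx).tail hE
    have hScomp : IsStrongComponent E S := by
      refine ⟨⟨a, haS⟩, ?_, ?_⟩
      · intro u hu v hv
        exact reach_restrict S hSdef (hu.2.trans hv.1) hv.2 hu.1
      · intro T hST hT t ht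
        have haT : a ∈ T := hST haS
        have h1 : Relation.ReflTransGen E a t :=
          Relation.ReflTransGen.mono (p := E) (fun x y (h : x ∈ T ∧ y ∈ T ∧ E x y) => h.2.2) _ _ (hT a haT t ht)
        have h2 : Relation.ReflTransGen E t a :=
          Relation.ReflTransGen.mono (p := E) (fun x y (h : x ∈ T ∧ y ∈ T ∧ E x y) => h.2.2) _ _ (hT t ht a haT)
        exact ⟨h1, h2⟩
    obtain ⟨f, hf⟩ := hbip S hScomp
    have hchf : l.Chain' (fun x y => f x ≠ f y) :=
      chain'_imp_mem l hch (fun p hp q hq hpq =>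
        hf p (hmem p hp) q (hmem q hq) (Or.inl hpq))
    rcases l with _ | ⟨x, tl⟩
    · exact hne rfl
    have hax : x = a := by simpa using ha
    subst hax
    have hbmem : b ∈ x :: tl := by
      have := List.getLast?_eq_getLast (List.cons_ne_nil x tl)
      rw [hb] at this
      have hbeq : b = (x :: tl).getLast (List.cons_ne_nil x tl) := by
        simpa using this
      rw [hbeq]
      exact List.getLast_mem _
    have hpar := bool_chain_parity tl x hchf b hb
    have heventl : Even tl.length := by
      have : Odd (tl.length + 1) := by simpa using hodd
      rw [Nat.odd_add_one] at this
      exact Nat.not_odd_iff_even.mp this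
    have hfba : f b = f x := hpar.mpr heventl
    exact hf b (hmem b hbmem) x (hmem x (by simp)) (Or.inl hE) hfba
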